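/- Let k ≥ 0 and l ≥ 0. For each i with 1 ≤ i ≤ k+l+1, the number of paths q in 𝒬(k,l,1) with q_1 ∈ {+1,0} such that exactly i of the steps q_m with q_m ∈ {+1,0} start on or below the x-axis equals (1/(k+l+1))·C(2k+l,k)·C(k+l+1,k+1). -/

import Mathlib

open Finset

/-- The sum of the first `m` entries of a sequence `p` of length `N` (the height `s_m`). -/
def psum {N : ℕ} (p : Fin N → ℤ) (m : ℕ) : ℤ :=
  ∑ j ∈ Finset.univ.filter (fun j : Fin N => (j : ℕ) < m), p j

namespace CF
set_option linter.unusedSectionVars false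
variable {n : ℕ} [NeZero n]

/-- periodic extension of the step sequence -/
def Q (q : Fin n → ℤ) (t : ℕ) : ℤ := q ⟨t % n, Nat.mod_lt _ (NeZero.pos n)⟩

/-- extended partial sums -/
def S (q : Fin n → ℤ) (m : ℕ) : ℤ := ∑ t ∈ Finset.range m, Q q t

lemma S_succ (q : Fin n → ℤ) (m : ℕ) : S q (m+1) = S q m + Q q m :=
  Finset.sum_range_succ _ _

lemma Q_apply (q : Fin n → ℤ) (m : Fin n) : Q q m.val = q m := by
  unfold Q; congr 1; exact Fin.ext (Nat.mod_eq_of_lt m.isLt)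

lemma Q_add_n (q : Fin n → ℤ) (t : ℕ) : Q q (t + n) = Q q t := by
  unfold Q; congr 1; exact Fin.ext (Nat.add_mod_right t n)

lemma S_add_n (q : Fin n → ℤ) (m : ℕ) : S q (m + n) = S q m + S q n := by
  induction m with
  | zero => simp [S]
  | succ m ih =>
    have h : m + 1 + n = (m + n) + 1 := by omega
    rw [h, S_succ, ih, Q_add_n, S_succ]; ring

lemma psum_eq (q : Fin n → ℤ) (m : ℕ) (hm : m ≤ n) : psum q m = S q m := by
  unfold psum S
  refine Finset.sum_nbij' (fun j : Fin n => (j : ℕ))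
    (fun t => (⟨t % n, Nat.mod_lt _ (NeZero.pos n)⟩ : Fin n)) ?_ ?_ ?_ ?_ ?_
  · intro a ha; simp only [mem_filter, mem_univ, true_and] at ha; exact mem_range.2 ha
  · intro t ht
    simp only [mem_range] at ht
    simp only [mem_filter, mem_univ, true_and]
    simpa [Nat.mod_eq_of_lt (lt_of_lt_of_le ht hm)] using ht
  · intro a _; exact Fin.ext (Nat.mod_eq_of_lt a.isLt)
  · intro t ht; simp only [mem_range] at ht
    simp [Nat.mod_eq_of_lt (lt_of_lt_of_le ht hm)]
  · intro a _; exact (Q_apply q a).symm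

/-- rotation: the path read starting from position `j` -/
def rot (j : Fin n) (q : Fin n → ℤ) : Fin n → ℤ := fun m => q (m + j)

lemma rot_zero (q : Fin n → ℤ) : rot 0 q = q := by
  funext m; simp [rot]

lemma rot_rot (a c : Fin n) (q : Fin n → ℤ) : rot a (rot c q) = rot (a + c) q := by
  funext m; simp [rot, add_assoc]

lemma Q_rot (j : Fin n) (q : Fin n → ℤ) (t : ℕ) : Q (rot j q) t = Q q (t + j.val) := by
  unfold Q rot; congr 1
  rw [Fin.add_def]
  exact Fin.ext (Nat.mod_add_mod t n j.val)

lemma S_rot (j : Fin n) (q : Fin n → ℤ) (m : ℕ) :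
    S (rot j q) m = S q (m + j.val) - S q j.val := by
  induction m with
  | zero => simp [S]
  | succ m ih =>
    have h : m + 1 + j.val = (m + j.val) + 1 := by omega
    rw [S_succ, ih, Q_rot, h, S_succ]; ring

/-- freeness of the rotation action on paths with total sum 1 -/
lemma rot_eq_self (j : Fin n) (q : Fin n → ℤ) (h : rot j q = q) (h1 : S q n = 1) :
    j = 0 := by
  have hQ : ∀ t, Q q (t + j.val) = Q q t := by
    intro t; rw [← Q_rot j q t, h]
  have hS : ∀ m, S q (m + j.val) = S q m + S q j.val := by
    intro m
    induction m with
    | zero => simp [S]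
    | succ m ih =>
      have hh : m + 1 + j.val = (m + j.val) + 1 := by omega
      rw [hh, S_succ, ih, hQ, S_succ]; ring
  have hmul : ∀ a, S q (a * j.val) = a * S q j.val := by
    intro a
    induction a with
    | zero => simp [S]
    | succ a ih =>
      have hh : (a+1) * j.val = a * j.val + j.val := by ring
      rw [hh, hS, ih]; push_cast; ring
  have hnn : ∀ a, S q (a * n) = a := by
    intro a
    induction a with
    | zero => simp [S]
    | succ a ih =>
      have hh : (a+1) * n = a * n + n := by ring
      rw [hh, S_add_n, ih, h1]; push_cast; ring
  have key : (n : ℤ) * S q j.val = (j.val : ℤ) := by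
    have e1 := hmul n
    have e2 := hnn j.val
    rw [Nat.mul_comm] at e1
    rw [e1] at e2
    exact_mod_cast e2
  have hjn : j.val < n := j.isLt
  have hc : S q j.val = 0 := by nlinarith [key, Int.ofNat_nonneg j.val]
  have : (j.val : ℤ) = 0 := by rw [← key, hc]; ring
  exact Fin.ext (by rw [Fin.val_zero]; omega)

/-- Generic rank lemma: ranking by an injective key into a linear order is a
bijection onto `{1, ..., U.card}`. -/
lemma rank_bij {α β : Type*} [DecidableEq α] [LinearOrder β] (U : Finset α) (f : α → β)
    (hf : ∀ a ∈ U, ∀ b ∈ U, f a = f b → a = b) {i : ℕ} (h1 : 1 ≤ i) (h2 : i ≤ U.card) :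
    ∃! u, u ∈ U ∧ (U.filter (fun p => f p ≤ f u)).card = i := by
  classical
  set r : α → ℕ := fun u => (U.filter (fun p => f p ≤ f u)).card with hr
  have hinj : ∀ u ∈ U, ∀ v ∈ U, r u = r v → u = v := by
    have aux : ∀ u ∈ U, ∀ v ∈ U, f u < f v → r u < r v := by
      intro u hu v hv hlt
      apply Finset.card_lt_card
      constructor
      · intro x hx
        simp only [mem_filter] at hx ⊢
        exact ⟨hx.1, le_of_lt (lt_of_le_of_lt hx.2 hlt)⟩
      · intro hsub
        have hvmem : v ∈ U.filter (fun p => f p ≤ f v) := by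
          simp [mem_filter, hv]
        have := hsub hvmem
        simp only [mem_filter] at this
        exact absurd this.2 (not_le.2 hlt)
    intro u hu v hv huv
    rcases lt_trichotomy (f u) (f v) with h | h | h
    · exact absurd huv (Nat.ne_of_lt (aux u hu v hv h))
    · exact hf u hu v hv h
    · exact absurd huv.symm (Nat.ne_of_lt (aux v hv u hu h))
  have himg : U.image r = Finset.Icc 1 U.card := by
    apply Finset.eq_of_subset_of_card_le
    · intro x hx
      simp only [mem_image] at hx
      obtain ⟨u, hu, rfl⟩ := hx
      simp only [Finset.mem_Icc]
      constructor
      · have : u ∈ U.filter (fun p => f p ≤ f u) := by simp [mem_filter, hu]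
        exact Finset.card_pos.2 ⟨u, this⟩
      · exact Finset.card_le_card (Finset.filter_subset _ _)
    · rw [Nat.card_Icc]
      simp only [Nat.add_sub_cancel]
      calc U.card = (U.image r).card := (Finset.card_image_of_injOn
            (fun a ha b hb => hinj a ha b hb)).symm
        _ ≤ (U.image r).card := le_refl _
  have hi : i ∈ U.image r := by
    rw [himg]; exact Finset.mem_Icc.2 ⟨h1, h2⟩
  simp only [mem_image] at hi
  obtain ⟨u, hu, hru⟩ := hi
  exact ⟨u, ⟨hu, hru⟩, fun v ⟨hv, hrv⟩ => hinj v hv u hu (hrv.trans hru.symm)⟩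

def upflat (q : Fin n → ℤ) : Finset (Fin n) := univ.filter (fun m => q m = 1 ∨ q m = 0)

def stat (q : Fin n → ℤ) : ℕ :=
  (univ.filter (fun m : Fin n => (q m = 1 ∨ q m = 0) ∧ psum q (m : ℕ) ≤ 0)).card

lemma S_top (q : Fin n → ℤ) : S q n = ∑ m : Fin n, q m := by
  unfold S
  rw [← Fin.sum_univ_eq_sum_range (fun t => Q q t) n]
  exact Finset.sum_congr rfl fun m _ => Q_apply q m

lemma sum_eq_one {k : ℕ} (q : Fin n → ℤ)
    (hstep : ∀ m, q m = 1 ∨ q m = 0 ∨ q m = -1)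
    (hup : (univ.filter (fun m => q m = 1)).card = k + 1)
    (hdown : (univ.filter (fun m => q m = -1)).card = k) : S q n = 1 := by
  rw [S_top]
  have hdec : ∀ m : Fin n, q m =
      (if q m = 1 then (1:ℤ) else 0) + (if q m = -1 then (-1:ℤ) else 0) := by
    intro m; rcases hstep m with h | h | h <;> simp [h]
  rw [Finset.sum_congr rfl (fun m _ => hdec m), Finset.sum_add_distrib]
  have h1 : ∑ m : Fin n, (if q m = 1 then (1:ℤ) else 0)
      = ((univ.filter (fun m => q m = 1)).card : ℤ) := by
    simp [Finset.sum_ite_eq, Finset.sum_boole]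
  have h2 : ∑ m : Fin n, (if q m = -1 then (-1:ℤ) else 0)
      = -((univ.filter (fun m => q m = -1)).card : ℤ) := by
    have : ∀ m : Fin n, (if q m = -1 then (-1:ℤ) else 0)
        = -(if q m = -1 then (1:ℤ) else 0) := by intro m; split_ifs <;> ring
    rw [Finset.sum_congr rfl (fun m _ => this m), Finset.sum_neg_distrib]
    simp [Finset.sum_boole]
  rw [h1, h2, hup, hdown]; push_cast; ring

lemma card_upflat {k : ℕ} (q : Fin n → ℤ)
    (hstep : ∀ m, q m = 1 ∨ q m = 0 ∨ q m = -1)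
    (hdown : (univ.filter (fun m => q m = -1)).card = k) :
    (upflat q).card = n - k := by
  have he : upflat q = univ.filter (fun m => ¬ q m = -1) := by
    apply Finset.ext; intro m
    simp only [upflat, mem_filter, mem_univ, true_and]
    constructor
    · rintro (h | h) <;> rw [h] <;> norm_num
    · intro h; rcases hstep m with h' | h' | h'
      · exact Or.inl h'
      · exact Or.inr h'
      · exact absurd h' h
  rw [he, Finset.filter_not, Finset.card_sdiff_of_subset (Finset.filter_subset _ _), hdown,
    Finset.card_univ, Fintype.card_fin]

lemma stat_rot (q : Fin n → ℤ) (h1 : S q n = 1) (j : Fin n) :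
    stat (rot j q) = ((upflat q).filter (fun p =>
      toLex ((S q p.val, n - p.val) : ℤ × ℕ) ≤ toLex ((S q j.val, n - j.val) : ℤ × ℕ))).card := by
  unfold stat
  have key : ∀ m : Fin n,
      (((rot j q) m = 1 ∨ (rot j q) m = 0) ∧ psum (rot j q) (m : ℕ) ≤ 0) ↔
      ((m + j) ∈ upflat q ∧
        toLex ((S q (m+j).val, n - (m+j).val) : ℤ × ℕ) ≤ toLex ((S q j.val, n - j.val) : ℤ × ℕ)) := by
    intro m
    have hps : psum (rot j q) (m : ℕ) = S q (m.val + j.val) - S q j.val := by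
      rw [psum_eq (rot j q) m.val (le_of_lt m.isLt), S_rot]
    have hrq : (rot j q) m = q (m + j) := rfl
    have hval : (m + j).val = (m.val + j.val) % n := by rw [Fin.add_def]
    have hmem : ((rot j q) m = 1 ∨ (rot j q) m = 0) ↔ (m + j) ∈ upflat q := by
      rw [hrq]; simp [upflat]
    by_cases hcase : m.val + j.val < n
    · have hp : (m + j).val = m.val + j.val := by rw [hval]; exact Nat.mod_eq_of_lt hcase
      have hle : n - (m+j).val ≤ n - j.val := by omega
      rw [hps, hmem, Prod.Lex.le_iff, ← hp]
      simp only [ofLex_toLex]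
      constructor
      · rintro ⟨hm, hs⟩
        refine ⟨hm, ?_⟩
        rcases lt_or_eq_of_le (by linarith : S q (m+j).val ≤ S q j.val) with h' | h'
        · exact Or.inl h'
        · exact Or.inr ⟨h', hle⟩
      · rintro ⟨hm, (h' | ⟨h', -⟩)⟩ <;> exact ⟨hm, by linarith⟩
    · have hp : (m + j).val = m.val + j.val - n := by
        rw [hval, Nat.mod_eq_sub_mod (by omega)]
        exact Nat.mod_eq_of_lt (by omega)
      have hplt : (m + j).val < j.val := by
        have := m.isLt; omega
      have hS : S q (m.val + j.val) = S q (m+j).val + 1 := by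
        have : m.val + j.val = (m+j).val + n := by omega
        rw [this, S_add_n, h1]
      have hnle : ¬ (n - (m+j).val ≤ n - j.val) := by
        have := j.isLt; omega
      rw [hps, hmem, Prod.Lex.le_iff, hS]
      simp only [ofLex_toLex]
      constructor
      · rintro ⟨hm, hs⟩
        exact ⟨hm, Or.inl (by linarith)⟩
      · rintro ⟨hm, (h' | ⟨h', hle⟩)⟩
        · exact ⟨hm, by linarith⟩
        · exact absurd hle hnle
  refine Finset.card_nbij' (fun m => m + j) (fun p => p - j) ?_ ?_ ?_ ?_
  · intro a ha
    simp only [mem_coe, mem_filter, mem_univ, true_and] at ha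
    have := (key a).1 ha
    simpa only [mem_coe, mem_filter] using this
  · intro b hb
    simp only [mem_coe, mem_filter, mem_univ, true_and]
    apply (key (b - j)).2
    rw [sub_add_cancel]
    simpa only [mem_coe, mem_filter, upflat, mem_univ, true_and] using hb
  · intro a _; exact add_sub_cancel_right a j
  · intro b _; exact sub_add_cancel b j

lemma exists_unique_rot (q : Fin n → ℤ) (h1 : S q n = 1) {i : ℕ} (hi1 : 1 ≤ i)
    (hi2 : i ≤ (upflat q).card) :
    ∃! j, j ∈ upflat q ∧ stat (rot j q) = i := by
  have hinj : ∀ a ∈ upflat q, ∀ b ∈ upflat q,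
      (fun p : Fin n => toLex ((S q p.val, n - p.val) : ℤ × ℕ)) a
        = (fun p : Fin n => toLex ((S q p.val, n - p.val) : ℤ × ℕ)) b → a = b := by
    intro a _ b _ hab
    simp only at hab
    have := toLex.injective hab
    have h2 : n - a.val = n - b.val := congrArg Prod.snd this
    have := a.isLt; have := b.isLt
    exact Fin.ext (by omega)
  obtain ⟨u, ⟨hu, hru⟩, huniq⟩ := rank_bij (upflat q)
    (fun p : Fin n => toLex ((S q p.val, n - p.val) : ℤ × ℕ)) hinj hi1 hi2
  refine ⟨u, ⟨hu, by rw [stat_rot q h1]; exact hru⟩, ?_⟩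
  rintro v ⟨hv, hrv⟩
  exact huniq v ⟨hv, by rw [← stat_rot q h1]; exact hrv⟩

/-- path predicate: steps in {1,0,-1}, k+1 ups, k downs -/
def PAgen (k : ℕ) (q : Fin n → ℤ) : Prop :=
  (∀ m, q m = 1 ∨ q m = 0 ∨ q m = -1) ∧
  (univ.filter (fun m => q m = 1)).card = k + 1 ∧
  (univ.filter (fun m => q m = -1)).card = k

def propB (k i : ℕ) (q : Fin n → ℤ) : Prop :=
  PAgen k q ∧ (q 0 = 1 ∨ q 0 = 0) ∧ stat q = i

lemma card_filter_comp_add (j : Fin n) (p : Fin n → Prop) [DecidablePred p] :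
    (univ.filter fun m => p (m + j)).card = (univ.filter p).card := by
  refine Finset.card_nbij' (fun m => m + j) (fun m => m - j) ?_ ?_ ?_ ?_
  · intro a ha; simp only [mem_coe, mem_filter, mem_univ, true_and] at ha ⊢; exact ha
  · intro b hb; simp only [mem_coe, mem_filter, mem_univ, true_and] at hb ⊢
    rwa [sub_add_cancel]
  · intro a _; exact add_sub_cancel_right a j
  · intro b _; exact sub_add_cancel b j

lemma PA_rot {k : ℕ} (j : Fin n) (q : Fin n → ℤ) (hq : PAgen k q) : PAgen k (rot j q) := by
  obtain ⟨hstep, hup, hdown⟩ := hq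
  refine ⟨fun m => hstep (m + j), ?_, ?_⟩
  · rw [show (univ.filter fun m => rot j q m = 1) = (univ.filter fun m => q (m+j) = 1) from rfl,
      card_filter_comp_add j (fun m => q m = 1)]
    exact hup
  · rw [show (univ.filter fun m => rot j q m = -1) = (univ.filter fun m => q (m+j) = -1) from rfl,
      card_filter_comp_add j (fun m => q m = -1)]
    exact hdown

/-- the orbit map is a bijection -/
lemma card_orbit (k i : ℕ) (hi1 : 1 ≤ i) (hi2 : i ≤ n - k) :
    Nat.card {q : Fin n → ℤ // PAgen k q}
      = n * Nat.card {q : Fin n → ℤ // propB k i q} := by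
  have hΦPA : ∀ (x : Fin n × {q : Fin n → ℤ // propB k i q}), PAgen k (rot x.1 x.2.1) :=
    fun x => PA_rot x.1 x.2.1 x.2.2.1
  set Φ : Fin n × {q : Fin n → ℤ // propB k i q} → {q : Fin n → ℤ // PAgen k q} :=
    fun x => ⟨rot x.1 x.2.1, hΦPA x⟩ with hΦ
  have hbij : Function.Bijective Φ := by
    constructor
    · rintro ⟨j, b⟩ ⟨j', b'⟩ h
      have heq : rot j b.1 = rot j' b'.1 := congrArg Subtype.val h
      have hb := b.2
      have h1b : S b.1 n = 1 := sum_eq_one b.1 hb.1.1 hb.1.2.1 hb.1.2.2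
      set d : Fin n := -j' + j with hd
      have hb' : b'.1 = rot d b.1 := by
        have e1 : rot (-j') (rot j b.1) = rot d b.1 := rot_rot _ _ _
        have e2 : rot (-j') (rot j' b'.1) = b'.1 := by
          rw [rot_rot, neg_add_cancel, rot_zero]
        rw [← e1, heq, e2]
      have hUcard : (upflat b.1).card = n - k := card_upflat b.1 hb.1.1 hb.1.2.2
      obtain ⟨u, -, huniq⟩ := exists_unique_rot b.1 h1b hi1 (by omega)
      have h0 : (0 : Fin n) = u := by
        apply huniq
        constructor
        · simp only [upflat, mem_filter, mem_univ, true_and]; exact hb.2.1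
        · rw [rot_zero]; exact hb.2.2
      have hdu : d = u := by
        apply huniq
        constructor
        · simp only [upflat, mem_filter, mem_univ, true_and]
          have : b'.1 0 = b.1 (0 + d) := by rw [hb']; rfl
          rw [zero_add] at this
          rw [← this]; exact b'.2.2.1
        · rw [← hb']; exact b'.2.2.2
      have hd0 : d = 0 := hdu.trans h0.symm
      have hbb : b' = b := Subtype.ext (by rw [hb', hd0, rot_zero])
      have hjj : j = j' := by
        have : -j' + j = 0 := hd0
        exact (neg_add_eq_zero.mp this).symm
      rw [hbb, hjj]
    · rintro ⟨q, hq⟩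
      have h1 : S q n = 1 := sum_eq_one q hq.1 hq.2.1 hq.2.2
      have hUcard : (upflat q).card = n - k := card_upflat q hq.1 hq.2.2
      obtain ⟨j, ⟨hjU, hjstat⟩, -⟩ := exists_unique_rot q h1 hi1 (by omega)
      have hbB : propB k i (rot j q) := by
        refine ⟨PA_rot j q hq, ?_, hjstat⟩
        have : rot j q 0 = q j := by
          show q (0 + j) = q j
          rw [zero_add]
        rw [this]
        simpa only [upflat, mem_filter, mem_univ, true_and] using hjU
      refine ⟨(-j, ⟨rot j q, hbB⟩), ?_⟩
      apply Subtype.ext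
      show rot (-j) (rot j q) = q
      rw [rot_rot, neg_add_cancel, rot_zero]
  calc Nat.card {q : Fin n → ℤ // PAgen k q}
      = Nat.card (Fin n × {q : Fin n → ℤ // propB k i q}) :=
        (Nat.card_eq_of_bijective Φ hbij).symm
    _ = n * Nat.card {q : Fin n → ℤ // propB k i q} := by
        rw [Nat.card_prod, Nat.card_eq_fintype_card, Fintype.card_fin]

lemma card_PA (k : ℕ) :
    Nat.card {q : Fin n → ℤ // PAgen k q}
      = n.choose (k+1) * (n - (k+1)).choose k := by
  classical
  set Sig := (Σ A : {A : Finset (Fin n) // A.card = k+1},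
    {T : Finset (Fin n) // T ⊆ (A.1)ᶜ ∧ T.card = k}) with hSig
  set gf : Sig → (Fin n → ℤ) :=
    fun x m => if m ∈ x.1.1 then 1 else if m ∈ x.2.1 then -1 else 0 with hgf
  have hmem1 : ∀ (x : Sig) (m : Fin n), gf x m = 1 ↔ m ∈ x.1.1 := by
    intro x m
    by_cases h1 : m ∈ x.1.1
    · simp [hgf, h1]
    · by_cases h2 : m ∈ x.2.1 <;> simp [hgf, h1, h2]
  have hmem2 : ∀ (x : Sig) (m : Fin n), gf x m = -1 ↔ m ∈ x.2.1 := by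
    intro x m
    by_cases h1 : m ∈ x.1.1
    · have h2 : m ∉ x.2.1 := fun hm => by
        have := x.2.2.1 hm; rw [Finset.mem_compl] at this; exact this h1
      simp [hgf, h1, h2]
    · by_cases h2 : m ∈ x.2.1 <;> simp [hgf, h1, h2]
  have hPA : ∀ x : Sig, PAgen k (gf x) := by
    intro x
    refine ⟨fun m => ?_, ?_, ?_⟩
    · simp only [hgf]; split_ifs <;> simp
    · have : (univ.filter fun m => gf x m = 1) = x.1.1 := by
        ext m; simp only [mem_filter, mem_univ, true_and]; exact hmem1 x m
      rw [this]; exact x.1.2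
    · have : (univ.filter fun m => gf x m = -1) = x.2.1 := by
        ext m; simp only [mem_filter, mem_univ, true_and]; exact hmem2 x m
      rw [this]; exact x.2.2.2
  set g : Sig → {q : Fin n → ℤ // PAgen k q} := fun x => ⟨gf x, hPA x⟩ with hg
  have hbij : Function.Bijective g := by
    constructor
    · intro x y h
      have hfe : gf x = gf y := congrArg Subtype.val h
      have hA : x.1.1 = y.1.1 := by
        ext m; rw [← hmem1 x m, ← hmem1 y m, hfe]
      have hT : x.2.1 = y.2.1 := by
        ext m; rw [← hmem2 x m, ← hmem2 y m, hfe]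
      obtain ⟨⟨A, hA1⟩, ⟨T, hT1⟩⟩ := x
      obtain ⟨⟨A', hA1'⟩, ⟨T', hT1'⟩⟩ := y
      simp only at hA hT
      subst hA; subst hT
      rfl
    · rintro ⟨q, hq⟩
      have hsub : (univ.filter fun m => q m = -1) ⊆ (univ.filter fun m => q m = 1)ᶜ := by
        intro m hm
        rw [Finset.mem_compl, mem_filter] at *
        simp only [mem_filter, mem_univ, true_and] at hm
        intro hc
        simp only [mem_filter, mem_univ, true_and] at hc  -- wrong; fix below
        rw [hm] at hc; norm_num at hc
      refine ⟨⟨⟨univ.filter fun m => q m = 1, hq.2.1⟩,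
        ⟨univ.filter fun m => q m = -1, hsub, hq.2.2⟩⟩, ?_⟩
      apply Subtype.ext
      funext m
      show (if m ∈ univ.filter (fun m => q m = 1) then (1:ℤ)
        else if m ∈ univ.filter (fun m => q m = -1) then -1 else 0) = q m
      rcases hq.1 m with h | h | h <;>
        simp [mem_filter, h]
  have hcount : Nat.card (Σ A : {A : Finset (Fin n) // A.card = k+1},
      {T : Finset (Fin n) // T ⊆ (A.1)ᶜ ∧ T.card = k})
      = n.choose (k+1) * (n - (k+1)).choose k := by
    rw [Nat.card_eq_fintype_card, Fintype.card_sigma]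
    have hfib : ∀ A : {A : Finset (Fin n) // A.card = k+1},
        Fintype.card {T : Finset (Fin n) // T ⊆ (A.1)ᶜ ∧ T.card = k}
          = (n - (k+1)).choose k := by
      intro A
      rw [Fintype.card_subtype]
      have : (univ.filter fun T : Finset (Fin n) => T ⊆ (A.1)ᶜ ∧ T.card = k)
          = Finset.powersetCard k (A.1)ᶜ := by
        ext T; simp [Finset.mem_powersetCard]
      rw [this, Finset.card_powersetCard, Finset.card_compl, Fintype.card_fin, A.2]
    rw [Finset.sum_congr rfl (fun A _ => hfib A), Finset.sum_const, Finset.card_univ,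
      smul_eq_mul]
    congr 1
    rw [Fintype.card_subtype]
    have : (univ.filter fun A : Finset (Fin n) => A.card = k+1)
        = Finset.powersetCard (k+1) (univ : Finset (Fin n)) := by
      ext A; simp [Finset.mem_powersetCard]
    rw [this, Finset.card_powersetCard, Finset.card_univ, Fintype.card_fin]
  rw [← hcount]
  exact (Nat.card_eq_of_bijective g hbij).symm

lemma binom_id (k l : ℕ) :
    (2*k+l+1).choose (k+1) * (k+l).choose k * (k+l+1)
      = (2*k+l+1) * ((2*k+l).choose k * (k+l+1).choose (k+1)) := by
  apply Nat.eq_of_mul_eq_mul_right (Nat.succ_pos k)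
  have h1 := Nat.add_one_mul_choose_eq (2*k+l) k
  have h2 := Nat.add_one_mul_choose_eq (k+l) k
  calc (2*k+l+1).choose (k+1) * (k+l).choose k * (k+l+1) * (k+1)
      = ((k+l+1) * (k+l).choose k) * ((2*k+l+1).choose (k+1) * (k+1)) := by ring
    _ = ((k+l+1).choose (k+1) * (k+1)) * ((2*k+l+1) * (2*k+l).choose k) := by
        rw [h2, ← h1]
    _ = (2*k+l+1) * ((2*k+l).choose k * (k+l+1).choose (k+1)) * (k+1) := by ring

end CF

/-- Among paths in 𝒬(k,l,1) (steps +1, 0, −1 with k+1 up steps, k down steps and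
l flat steps) starting with an up or flat step, for each `1 ≤ i ≤ k+l+1` the number
with exactly `i` up or flat steps starting on or below the x-axis is
`(1/(k+l+1))·C(2k+l,k)·C(k+l+1,k+1)`. -/
theorem motzkin_schroeder_chung_feller_up_flat (k l : ℕ) (i : ℕ) (hi1 : 1 ≤ i)
    (hi2 : i ≤ k + l + 1) :
    Nat.card {q : Fin (2*k+l+1) → ℤ //
      (∀ m, q m = 1 ∨ q m = 0 ∨ q m = -1) ∧
      (univ.filter (fun m => q m = 1)).card = k + 1 ∧
      (univ.filter (fun m => q m = -1)).card = k ∧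
      (q ⟨0, Nat.succ_pos _⟩ = 1 ∨ q ⟨0, Nat.succ_pos _⟩ = 0) ∧
      (univ.filter (fun m : Fin (2*k+l+1) =>
        (q m = 1 ∨ q m = 0) ∧ psum q (m : ℕ) ≤ 0)).card = i }
      * (k + l + 1) = Nat.choose (2*k+l) k * Nat.choose (k+l+1) (k+1) := by
  have hin : i ≤ 2*k+l+1 - k := by omega
  have hkl : 2*k+l+1 - (k+1) = k+l := by omega
  have hpos : 0 < 2*k+l+1 := by omega
  have hc : Nat.card {q : Fin (2*k+l+1) → ℤ //
      (∀ m, q m = 1 ∨ q m = 0 ∨ q m = -1) ∧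
      (univ.filter (fun m => q m = 1)).card = k + 1 ∧
      (univ.filter (fun m => q m = -1)).card = k ∧
      (q ⟨0, Nat.succ_pos _⟩ = 1 ∨ q ⟨0, Nat.succ_pos _⟩ = 0) ∧
      (univ.filter (fun m : Fin (2*k+l+1) =>
        (q m = 1 ∨ q m = 0) ∧ psum q (m : ℕ) ≤ 0)).card = i }
      = Nat.card {q : Fin (2*k+l+1) → ℤ // CF.propB k i q} := by
    apply Nat.card_congr
    apply Equiv.subtypeEquivRight
    intro q
    have h0 : q ⟨0, Nat.succ_pos _⟩ = q 0 := congrArg q (Fin.ext (by simp))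
    rw [h0]
    unfold CF.propB CF.PAgen CF.stat
    tauto
  rw [hc]
  have key := CF.card_orbit (n := 2*k+l+1) k i hi1 hin
  have hA := CF.card_PA (n := 2*k+l+1) k
  rw [hkl] at hA
  apply Nat.eq_of_mul_eq_mul_left hpos
  calc (2*k+l+1) * (Nat.card {q : Fin (2*k+l+1) → ℤ // CF.propB k i q} * (k+l+1))
      = (Nat.card {q : Fin (2*k+l+1) → ℤ // CF.PAgen k q}) * (k+l+1) := by
        rw [key]; ring
    _ = (2*k+l+1).choose (k+1) * (k+l).choose k * (k+l+1) := by rw [hA]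
    _ = (2*k+l+1) * ((2*k+l).choose k * (k+l+1).choose (k+1)) := CF.binom_id k l
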